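/- Soundness of local sync graphs: if a node (q, Z) with Z nonempty is reachable from the initial node in a local sync graph of a network N, then state q is reachable by a run of N. -/

import Mathlib

open Classical

/-- Comparison operators appearing in guards `x ~ c`. -/
inductive Cmp | lt | le | eq | ge | gt

def Cmp.sat : Cmp → ℝ → ℤ → Prop
  | .lt, r, c => r < (c : ℝ)
  | .le, r, c => r ≤ (c : ℝ)
  | .eq, r, c => r = (c : ℝ)
  | .ge, r, c => (c : ℝ) ≤ r
  | .gt, r, c => (c : ℝ) < r

/-- A guard: a finite conjunction of constraints `x ~ c` on clocks. -/
abbrev Guard (Clock : Type) := List (Clock × Cmp × ℤ)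

/-- A difference constraint `y₁ - y₂ ◁ c` over variables `V`;
the boolean is `true` for strict `<` and `false` for `≤`. -/
abbrev DiffConstraint (V : Type) := V × V × Bool × ℤ

/-- Satisfaction of a difference constraint. -/
def csat {V : Type} (v : V → ℝ) (c : DiffConstraint V) : Prop :=
  if c.2.2.1 then v c.1 - v c.2.1 < (c.2.2.2 : ℝ) else v c.1 - v c.2.1 ≤ (c.2.2.2 : ℝ)

/-- A network of timed automata: `k` processes, each owning its clocks and
locations; each action `b` has a domain `dom b` of synchronizing processes, and
for each process in the domain a set of `b`-transitions (location, guard, reset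
set, target location), whose guards and resets only mention own clocks. -/
structure Network where
  k : ℕ
  kpos : 0 < k
  Clock : Type
  [clockFin : Fintype Clock]
  owner : Clock → Fin k
  Act : Type
  dom : Act → Finset (Fin k)
  Loc : Fin k → Type
  init : ∀ p, Loc p
  Trans : ∀ (_ : Act) (p : Fin k), Set (Loc p × Guard Clock × Set Clock × Loc p)
  trans_wf : ∀ b p tr, tr ∈ Trans b p →
    (∀ c ∈ tr.2.1, owner c.1 = p) ∧ (∀ x ∈ tr.2.2.1, owner x = p)

attribute [instance] Network.clockFin

namespace Network

variable (N : Network)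

/-- Global (discrete) states of the network. -/
abbrev State := ∀ p, N.Loc p

/-- Variables of local valuations: offset variables `x̃` and reference clocks `t_p`. -/
abbrev LVar := N.Clock ⊕ Fin N.k

/-- Variables of global valuations: offset variables `x̃` and the global reference clock `t`. -/
abbrev GVar := N.Clock ⊕ Unit

abbrev LVal := N.LVar → ℝ

abbrev GVal := N.GVar → ℝ

/-- A local valuation: nonnegative, and each offset is below the owner's reference clock. -/
def IsLVal (v : N.LVal) : Prop :=
  (∀ y, 0 ≤ v y) ∧ ∀ x : N.Clock, v (.inl x) ≤ v (.inr (N.owner x))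

/-- A global valuation: nonnegative, and each offset is below the global time `t`. -/
def IsGVal (v : N.GVal) : Prop :=
  (∀ y, 0 ≤ v y) ∧ ∀ x : N.Clock, v (.inl x) ≤ v (.inr ())

/-- Satisfaction of a guard by a local valuation: the value of clock `x` is
`v t_p - v x̃` where `p` owns `x`. -/
def lgsat (v : N.LVal) (g : Guard N.Clock) : Prop :=
  ∀ c ∈ g, Cmp.sat c.2.1 (v (.inr (N.owner c.1)) - v (.inl c.1)) c.2.2

/-- Satisfaction of a guard by a global valuation: the value of clock `x` is `v t - v x̃`. -/
def ggsat (v : N.GVal) (g : Guard N.Clock) : Prop :=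
  ∀ c ∈ g, Cmp.sat c.2.1 (v (.inr ()) - v (.inl c.1)) c.2.2

/-- Global delay: only the global reference clock advances. -/
def gdelay (v : N.GVal) (δ : ℝ) : N.GVal :=
  fun y => match y with
    | .inl x => v (.inl x)
    | .inr _ => v (.inr ()) + δ

/-- `v'` is obtained from `v` by a (finite) sequence of local delays; equivalently,
each reference clock advances by some nonnegative amount, offsets are unchanged. -/
def ldelayed (v v' : N.LVal) : Prop :=
  ∃ δ : Fin N.k → ℝ, (∀ p, 0 ≤ δ p) ∧
    v' = fun y => match y with
      | .inl x => v (.inl x)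
      | .inr p => v (.inr p) + δ p

/-- Reset of the clocks in `R` in a global valuation. -/
noncomputable def greset (R : Set N.Clock) (v : N.GVal) : N.GVal :=
  fun y => match y with
    | .inl x => if x ∈ R then v (.inr ()) else v (.inl x)
    | .inr u => v (.inr u)

/-- Reset of the clocks in `R` in a local valuation: `x̃` is set to the local
time of the process owning `x`. -/
noncomputable def lreset (R : Set N.Clock) (v : N.LVal) : N.LVal :=
  fun y => match y with
    | .inl x => if x ∈ R then v (.inr (N.owner x)) else v (.inl x)
    | .inr p => v (.inr p)

/-- Global action step on action `b`. -/
def gact (b : N.Act) (c c' : N.State × N.GVal) : Prop :=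
  ∃ tr : ∀ p, p ∈ N.dom b → N.Loc p × Guard N.Clock × Set N.Clock × N.Loc p,
    (∀ p (h : p ∈ N.dom b),
      tr p h ∈ N.Trans b p ∧ (tr p h).1 = c.1 p ∧ (tr p h).2.2.2 = c'.1 p) ∧
    (∀ p, p ∉ N.dom b → c'.1 p = c.1 p) ∧
    (∀ p (h : p ∈ N.dom b), N.ggsat c.2 (tr p h).2.1) ∧
    c'.2 = N.greset {x | ∃ p h, x ∈ (tr p h).2.2.1} c.2

/-- Local action step on action `b`: additionally the reference clocks of the
processes in `dom b` must agree. -/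
def lact (b : N.Act) (c c' : N.State × N.LVal) : Prop :=
  ∃ tr : ∀ p, p ∈ N.dom b → N.Loc p × Guard N.Clock × Set N.Clock × N.Loc p,
    (∀ p (h : p ∈ N.dom b),
      tr p h ∈ N.Trans b p ∧ (tr p h).1 = c.1 p ∧ (tr p h).2.2.2 = c'.1 p) ∧
    (∀ p, p ∉ N.dom b → c'.1 p = c.1 p) ∧
    (∀ p ∈ N.dom b, ∀ p' ∈ N.dom b, c.2 (.inr p) = c.2 (.inr p')) ∧
    (∀ p (h : p ∈ N.dom b), N.lgsat c.2 (tr p h).2.1) ∧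
    c'.2 = N.lreset {x | ∃ p h, x ∈ (tr p h).2.2.1} c.2

/-- Global run on a word of actions: delays and action steps alternate,
starting and ending with a (possibly zero) delay. -/
inductive GRun : List N.Act → (N.State × N.GVal) → (N.State × N.GVal) → Prop
  | nil {q v} (δ : ℝ) (hδ : 0 ≤ δ) : GRun [] (q, v) (q, N.gdelay v δ)
  | cons {b u q v c1 c2} (δ : ℝ) (hδ : 0 ≤ δ)
      (hb : N.gact b (q, N.gdelay v δ) c1) (h : GRun u c1 c2) :
      GRun (b :: u) (q, v) c2

/-- Local run on a word of actions: sequences of local delays and local action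
steps alternate. -/
inductive LRun : List N.Act → (N.State × N.LVal) → (N.State × N.LVal) → Prop
  | nil {q v v'} (hd : N.ldelayed v v') : LRun [] (q, v) (q, v')
  | cons {b u q v v1 c1 c2} (hd : N.ldelayed v v1)
      (hb : N.lact b (q, v1) c1) (h : LRun u c1 c2) :
      LRun (b :: u) (q, v) c2

/-- Local run recording, for each action, its execution time: the common value
of the reference clocks of `dom b` when the step is taken. -/
inductive LRunT : List (N.Act × ℝ) → (N.State × N.LVal) → (N.State × N.LVal) → Prop
  | nil {q v v'} (hd : N.ldelayed v v') : LRunT [] (q, v) (q, v')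
  | cons {b θ u q v v1 c1 c2} (hd : N.ldelayed v v1)
      (hb : N.lact b (q, v1) c1) (hθ : ∀ p ∈ N.dom b, v1 (.inr p) = θ)
      (h : LRunT u c1 c2) :
      LRunT ((b, θ) :: u) (q, v) c2

/-- Equivalence of action sequences: generated by swapping adjacent actions
with disjoint domains. -/
inductive equiv : List N.Act → List N.Act → Prop
  | swap (u w : List N.Act) (a b : N.Act) (h : Disjoint (N.dom a) (N.dom b)) :
      equiv (u ++ a :: b :: w) (u ++ b :: a :: w)
  | refl (u : List N.Act) : equiv u u
  | trans {u v w} : equiv u v → equiv v w → equiv u w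

/-- A local valuation is synchronized if all reference clocks agree. -/
def Synchronized (v : N.LVal) : Prop :=
  ∀ p p' : Fin N.k, v (.inr p) = v (.inr p')

/-- The global valuation associated to a (synchronized) local valuation. -/
def toGlobal (v : N.LVal) : N.GVal :=
  fun y => match y with
    | .inl x => v (.inl x)
    | .inr _ => v (.inr ⟨0, N.kpos⟩)

/-- The synchronized local valuation associated to a global valuation. -/
def toLocal (v : N.GVal) : N.LVal :=
  fun y => match y with
    | .inl x => v (.inl x)
    | .inr _ => v (.inr ())

/-- The synchronized valuations of a set of local valuations. -/
def syncSet (S : Set N.LVal) : Set N.LVal := {v ∈ S | N.Synchronized v}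

/-- The set of local valuations defined by a list of difference constraints. -/
def lzset (L : List (DiffConstraint N.LVar)) : Set N.LVal :=
  {v | N.IsLVal v ∧ ∀ c ∈ L, csat v c}

/-- The set of global valuations defined by a list of difference constraints. -/
def gzset (L : List (DiffConstraint N.GVar)) : Set N.GVal :=
  {v | N.IsGVal v ∧ ∀ c ∈ L, csat v c}

/-- Local zones: sets of local valuations definable by difference constraints. -/
def IsLZone (S : Set N.LVal) : Prop := ∃ L, S = N.lzset L

/-- Global zones: sets of global valuations definable by difference constraints. -/
def IsGZone (S : Set N.GVal) : Prop := ∃ L, S = N.gzset L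

/-- Local-time elapse of a set of local valuations. -/
def lelapse (S : Set N.LVal) : Set N.LVal := {v' | ∃ v ∈ S, N.ldelayed v v'}

/-- Global time elapse of a set of global valuations. -/
def gelapse (S : Set N.GVal) : Set N.GVal :=
  {v' | ∃ v ∈ S, ∃ δ, 0 ≤ δ ∧ v' = N.gdelay v δ}

/-- Local zone graph step on action `b`:
`Z' = local-elapse([R](Z ∩ Z_g ∩ Z_sync))`, required nonempty. -/
def lzstep (b : N.Act) (c c' : N.State × Set N.LVal) : Prop :=
  ∃ tr : ∀ p, p ∈ N.dom b → N.Loc p × Guard N.Clock × Set N.Clock × N.Loc p,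
    (∀ p (h : p ∈ N.dom b),
      tr p h ∈ N.Trans b p ∧ (tr p h).1 = c.1 p ∧ (tr p h).2.2.2 = c'.1 p) ∧
    (∀ p, p ∉ N.dom b → c'.1 p = c.1 p) ∧
    c'.2 = N.lelapse ((N.lreset {x | ∃ p h, x ∈ (tr p h).2.2.1}) ''
      (c.2 ∩ {v | ∀ p (h : p ∈ N.dom b), N.lgsat v (tr p h).2.1}
           ∩ {v | ∀ p ∈ N.dom b, ∀ p' ∈ N.dom b, v (.inr p) = v (.inr p')})) ∧
    (c'.2).Nonempty

/-- Sequence of local zone graph steps along a word. -/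
inductive LZRun : List N.Act → (N.State × Set N.LVal) → (N.State × Set N.LVal) → Prop
  | nil (c) : LZRun [] c c
  | cons {b u c c1 c2} (hb : N.lzstep b c c1) (h : LZRun u c1 c2) :
      LZRun (b :: u) c c2

/-- The initial (discrete) state of the network. -/
def initState : N.State := N.init

/-- The initial global valuation: everything is `0`. -/
def gvalInit : N.GVal := fun _ => 0

/-- The initial local valuation: everything is `0`. -/
def lvalInit : N.LVal := fun _ => 0

/-- The initial node's zone in the local zone graph. -/
def lzoneInit : Set N.LVal := N.lelapse {N.lvalInit}

/-- State `q` is reachable in the global-time semantics. -/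
def GReach (q : N.State) : Prop :=
  ∃ u v, N.GRun u (N.initState, N.gvalInit) (q, v)

/-- State `q` is reachable in the local-time semantics. -/
def LReach (q : N.State) : Prop :=
  ∃ u v, N.LRun u (N.initState, N.lvalInit) (q, v)

/-- Time-abstract simulation between global valuations. -/
def TASim (sim : N.GVal → N.GVal → Prop) : Prop :=
  ∀ v1 v2, sim v1 v2 → ∀ q b δ1 q' v1', 0 ≤ δ1 →
    N.gact b (q, N.gdelay v1 δ1) (q', v1') →
    ∃ δ2, 0 ≤ δ2 ∧ ∃ v2', N.gact b (q, N.gdelay v2 δ2) (q', v2') ∧ sim v1' v2'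

end Network

/-- A local sync graph over a network `N`, based on an abstraction `abs` over
global zones: a subgraph of the local zone graph with covered/uncovered nodes,
satisfying conditions C0–C4. -/
structure SyncGraph (N : Network) (abs : Set N.GVal → Set N.GVal) where
  nodes : Set (N.State × Set N.LVal)
  covered : N.State × Set N.LVal → Prop
  edges : (N.State × Set N.LVal) → (N.State × Set N.LVal) → Prop
  edges_mem : ∀ s s', edges s s' → s ∈ nodes ∧ s' ∈ nodes
  edges_lzg : ∀ s s', edges s s' → ∃ b, N.lzstep b s s'
  init_mem : (N.initState, N.lzoneInit) ∈ nodes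
  init_unc : ¬ covered (N.initState, N.lzoneInit)
  reach : ∀ s ∈ nodes, Relation.ReflTransGen edges (N.initState, N.lzoneInit) s
  unc_succ : ∀ s ∈ nodes, ¬ covered s → ∀ b s', N.lzstep b s s' → edges s s'
  cov_sub : ∀ s ∈ nodes, covered s → ∃ s' ∈ nodes, ¬ covered s' ∧ s.1 = s'.1 ∧
    N.toGlobal '' N.syncSet s.2 ⊆ abs (N.toGlobal '' N.syncSet s'.2)
  cov_nosucc : ∀ s s', covered s → ¬ edges s s'

/-- A list of difference constraints is canonical (every constraint is tight):
no constraint is implied by the remaining ones. -/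
def canonicalL (N : Network) (L : List (DiffConstraint N.LVar)) : Prop :=
  ∀ c ∈ L, ∃ v, N.IsLVal v ∧ (∀ c' ∈ L, c' ≠ c → csat v c') ∧ ¬ csat v c

/-- Minea's region-like equivalence with maximal constant `cmax`. -/
def regEquiv {V : Type} (cmax : ℤ) (v1 v2 : V → ℝ) : Prop :=
  ∀ a b : V, (⌊v1 a - v1 b⌋ = ⌊v2 a - v2 b⌋) ∨
    (⌊v1 a - v1 b⌋ > cmax ∧ ⌊v2 a - v2 b⌋ > cmax) ∨
    (⌊v1 a - v1 b⌋ < -cmax ∧ ⌊v2 a - v2 b⌋ < -cmax)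


/- ===================== Auxiliary development ===================== -/

section Aux
namespace Network
variable {N : Network}

lemma ldelayed_refl (v : N.LVal) : N.ldelayed v v := by
  refine ⟨fun _ => 0, fun _ => le_rfl, ?_⟩
  funext y; cases y <;> simp

lemma ldelayed_trans {u v w : N.LVal} (h1 : N.ldelayed u v) (h2 : N.ldelayed v w) :
    N.ldelayed u w := by
  obtain ⟨d1, hd1, rfl⟩ := h1
  obtain ⟨d2, hd2, rfl⟩ := h2
  refine ⟨fun p => d1 p + d2 p, fun p => add_nonneg (hd1 p) (hd2 p), ?_⟩
  funext y; cases y <;> simp [add_assoc]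

lemma ldelayed_inl {v v' : N.LVal} (h : N.ldelayed v v') (x : N.Clock) :
    v' (.inl x) = v (.inl x) := by
  obtain ⟨d, hd, rfl⟩ := h; simp

lemma ldelayed_inr {v v' : N.LVal} (h : N.ldelayed v v') (p : Fin N.k) :
    v (.inr p) ≤ v' (.inr p) := by
  obtain ⟨d, hd, rfl⟩ := h; simpa using hd p

lemma LRunT_absorb {l : List (N.Act × ℝ)} {q : N.State} {v v' : N.LVal}
    {c2 : N.State × N.LVal} (hd : N.ldelayed v v') (h : N.LRunT l (q, v') c2) :
    N.LRunT l (q, v) c2 := by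
  cases h with
  | nil hd' => exact .nil (ldelayed_trans hd hd')
  | cons hd' hb hth h => exact .cons (ldelayed_trans hd hd') hb hth h

lemma lreset_inr (R : Set N.Clock) (v : N.LVal) (p : Fin N.k) :
    N.lreset R v (.inr p) = v (.inr p) := rfl

lemma lreset_inl (R : Set N.Clock) (v : N.LVal) (x : N.Clock) :
    N.lreset R v (.inl x) = if x ∈ R then v (.inr (N.owner x)) else v (.inl x) := rfl

lemma greset_inl (R : Set N.Clock) (v : N.GVal) (x : N.Clock) :
    N.greset R v (.inl x) = if x ∈ R then v (.inr ()) else v (.inl x) := rfl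

lemma greset_inr (R : Set N.Clock) (v : N.GVal) (u : Unit) :
    N.greset R v (.inr u) = v (.inr u) := rfl

/-- Insert an element into a list sorted by the second (time) component. -/
noncomputable def insT {A : Type _} (e : A × ℝ) : List (A × ℝ) → List (A × ℝ)
  | [] => [e]
  | f :: l => if e.2 ≤ f.2 then e :: f :: l else f :: insT e l

lemma mem_insT {A : Type _} {e x : A × ℝ} : ∀ {l : List (A × ℝ)},
    x ∈ insT e l → x = e ∨ x ∈ l := by
  intro l
  induction l with
  | nil => intro hx; simpa [insT] using hx
  | cons f l ih =>
    intro hx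
    rw [insT] at hx
    split at hx
    · rcases List.mem_cons.1 hx with h | h
      · exact Or.inl h
      · exact Or.inr h
    · rcases List.mem_cons.1 hx with h | h
      · exact Or.inr (h ▸ List.mem_cons_self (a := f) (l := l))
      · rcases ih h with h' | h'
        · exact Or.inl h'
        · exact Or.inr (List.mem_cons_of_mem f h')

lemma pairwise_insT {A : Type _} {e : A × ℝ} : ∀ {l : List (A × ℝ)},
    l.Pairwise (fun a b => a.2 ≤ b.2) →
    (insT e l).Pairwise (fun a b => a.2 ≤ b.2) := by
  intro l
  induction l with
  | nil => intro _; simp [insT]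
  | cons f l ih =>
    intro hp
    rw [List.pairwise_cons] at hp
    rw [insT]
    split
    · rename_i hle
      rw [List.pairwise_cons]
      constructor
      · intro x hx
        rcases List.mem_cons.1 hx with rfl | hx
        · exact hle
        · exact le_trans hle (hp.1 x hx)
      · exact List.pairwise_cons.2 hp
    · rename_i hgt
      rw [List.pairwise_cons]
      refine ⟨?_, ih hp.2⟩
      intro x hx
      rcases mem_insT hx with rfl | hx
      · exact le_of_not_ge hgt
      · exact hp.1 x hx

lemma swap_head {a b : N.Act} {tha thb : ℝ} {l : List (N.Act × ℝ)}
    {c c2 : N.State × N.LVal}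
    (h : N.LRunT ((a, tha) :: (b, thb) :: l) c c2) (hlt : thb < tha) :
    N.LRunT ((b, thb) :: (a, tha) :: l) c c2 := by
  obtain ⟨q, v⟩ := c
  cases h with
  | cons hd1 hba hthA h1 =>
    rename_i v1 c1
    cases h1 with
    | cons hd2 hbb hthB h2 =>
      rename_i q1 w1 v2 c2'
      obtain ⟨q2, u2⟩ := c2'
      obtain ⟨tra, htra, hoffa, hsynca, hga, hresa⟩ := hba
      obtain ⟨trb, htrb, hoffb, hsyncb, hgb, hresb⟩ := hbb
      simp only at hresa hresb
      obtain ⟨d1, hd1n, hv1⟩ := hd1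
      obtain ⟨d2, hd2n, hv2⟩ := hd2
      set Ra : Set N.Clock := {x | ∃ p hp, x ∈ (tra p hp).2.2.1} with hRa
      set Rb : Set N.Clock := {x | ∃ p hp, x ∈ (trb p hp).2.2.1} with hRb
      -- cleaned-up components
      have htraMem : ∀ p (hp : p ∈ N.dom a), tra p hp ∈ N.Trans a p := fun p hp => (htra p hp).1
      have htraSrc : ∀ p (hp : p ∈ N.dom a), (tra p hp).1 = q p := fun p hp => (htra p hp).2.1
      have htraTgt : ∀ p (hp : p ∈ N.dom a), (tra p hp).2.2.2 = q1 p := fun p hp => (htra p hp).2.2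
      have hoffa' : ∀ p, p ∉ N.dom a → q1 p = q p := fun p hp => hoffa p hp
      have hga' : ∀ p (hp : p ∈ N.dom a), N.lgsat v1 (tra p hp).2.1 := hga
      have htrbMem : ∀ p (hp : p ∈ N.dom b), trb p hp ∈ N.Trans b p := fun p hp => (htrb p hp).1
      have htrbSrc : ∀ p (hp : p ∈ N.dom b), (trb p hp).1 = q1 p := fun p hp => (htrb p hp).2.1
      have htrbTgt : ∀ p (hp : p ∈ N.dom b), (trb p hp).2.2.2 = q2 p := fun p hp => (htrb p hp).2.2
      have hoffb' : ∀ p, p ∉ N.dom b → q2 p = q1 p := fun p hp => hoffb p hp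
      have hgb' : ∀ p (hp : p ∈ N.dom b), N.lgsat v2 (trb p hp).2.1 := hgb
      -- ownership of reset clocks
      have hownRa : ∀ x ∈ Ra, N.owner x ∈ N.dom a := by
        rintro x ⟨p, hp, hx⟩
        have := (N.trans_wf a p _ (htraMem p hp)).2 x hx
        rw [this]; exact hp
      have hownRb : ∀ x ∈ Rb, N.owner x ∈ N.dom b := by
        rintro x ⟨p, hp, hx⟩
        have := (N.trans_wf b p _ (htrbMem p hp)).2 x hx
        rw [this]; exact hp
      -- basic valuation computations
      have hw1inr : ∀ p, w1 (.inr p) = v (.inr p) + d1 p := by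
        intro p; rw [hresa]; rw [lreset_inr]; rw [hv1]
      have hw1inl : ∀ x, x ∉ Ra → w1 (.inl x) = v (.inl x) := by
        intro x hx; rw [hresa, lreset_inl, if_neg hx, hv1]
      have hv2inr : ∀ p, v2 (.inr p) = v (.inr p) + d1 p + d2 p := by
        intro p; rw [hv2]; show w1 (.inr p) + d2 p = _; rw [hw1inr]
      have hv2inl : ∀ x, v2 (.inl x) = w1 (.inl x) := by
        intro x; rw [hv2]
      -- disjointness of domains
      have hdisj : ∀ p, p ∈ N.dom a → p ∉ N.dom b := by
        intro p hpa hpb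
        have h1 : v1 (.inr p) = tha := hthA p hpa
        have h2 : v2 (.inr p) = thb := hthB p hpb
        have h3 : v2 (.inr p) = v1 (.inr p) + d2 p := by
          rw [hv2]; show w1 (.inr p) + d2 p = _
          rw [hresa]; rfl
        have : thb = tha + d2 p := by rw [← h1, ← h2, h3]
        have := hd2n p
        linarith
      have hdisjRab : ∀ x ∈ Ra, x ∉ Rb := fun x hx hx' => hdisj _ (hownRa x hx) (hownRb x hx')
      have hv1inl : ∀ x, v1 (.inl x) = v (.inl x) := by intro x; rw [hv1]
      have hv1inr : ∀ p, v1 (.inr p) = v (.inr p) + d1 p := by intro p; rw [hv1]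
      -- the new first delay
      set d1' : Fin N.k → ℝ := fun p => if p ∈ N.dom b then d1 p + d2 p else 0 with hd1'
      set w1' : N.LVal := fun y => match y with
        | .inl x => v (.inl x)
        | .inr p => v (.inr p) + d1' p with hw1'
      have hw1'inr : ∀ p, w1' (.inr p) = v (.inr p) + d1' p := fun p => rfl
      have hw1'inl : ∀ x, w1' (.inl x) = v (.inl x) := fun x => rfl
      have hw1'domb : ∀ p ∈ N.dom b, w1' (.inr p) = thb := by
        intro p hp
        have e : w1' (.inr p) = v (.inr p) + (if p ∈ N.dom b then d1 p + d2 p else 0) := rfl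
        rw [e, if_pos hp, ← hthB p hp, hv2inr p]; ring
      set q1' : N.State := fun p => if hp : p ∈ N.dom b then (trb p hp).2.2.2 else q p with hq1'
      have hq1'pos : ∀ p (hp : p ∈ N.dom b), q1' p = (trb p hp).2.2.2 := by
        intro p hp; simp only [hq1', dif_pos hp]
      have hq1'neg : ∀ p, p ∉ N.dom b → q1' p = q p := by
        intro p hp; simp only [hq1', dif_neg hp]
      set u1' : N.LVal := N.lreset Rb w1' with hu1'
      -- second delay
      set d2' : Fin N.k → ℝ := fun p => if p ∈ N.dom a then d1 p else 0 with hd2'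
      set w2' : N.LVal := fun y => match y with
        | .inl x => u1' (.inl x)
        | .inr p => u1' (.inr p) + d2' p with hw2'
      have hw2'inl : ∀ x, x ∉ Rb → w2' (.inl x) = v (.inl x) := by
        intro x hx
        have e2 : N.lreset Rb w1' (.inl x) = w1' (.inl x) := by
          rw [lreset_inl, if_neg hx]
        exact e2.trans (hw1'inl x)
      have hw2'doma : ∀ p ∈ N.dom a, w2' (.inr p) = tha := by
        intro p hp
        have e : w2' (.inr p) = v (.inr p) + (if p ∈ N.dom b then d1 p + d2 p else 0)
            + (if p ∈ N.dom a then d1 p else 0) := rfl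
        rw [e, if_neg (hdisj p hp), if_pos hp, add_zero, ← hv1inr]
        exact hthA p hp
      -- the swapped b-action
      have hactb : N.lact b (q, w1') (q1', u1') := by
        refine ⟨trb, ?_, ?_, ?_, ?_, ?_⟩
        · intro p hp
          refine ⟨htrbMem p hp, ?_, ?_⟩
          · show (trb p hp).1 = q p
            rw [htrbSrc p hp]
            exact hoffa' p (fun hpa => hdisj p hpa hp)
          · show (trb p hp).2.2.2 = q1' p
            exact (hq1'pos p hp).symm
        · intro p hp
          show q1' p = q p
          exact hq1'neg p hp
        · intro p hp p' hp'
          show w1' (.inr p) = w1' (.inr p')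
          rw [hw1'domb p hp, hw1'domb p' hp']
        · intro p hp
          show N.lgsat w1' (trb p hp).2.1
          intro cc hcc
          have hox : N.owner cc.1 = p := (N.trans_wf b p _ (htrbMem p hp)).1 cc hcc
          have hnotRa : cc.1 ∉ Ra := fun hin => hdisj _ (hownRa _ hin) (hox ▸ hp)
          have e1 : w1' (.inr (N.owner cc.1)) = v2 (.inr (N.owner cc.1)) := by
            rw [hox, hw1'domb p hp, hthB p hp]
          have e2 : w1' (.inl cc.1) = v2 (.inl cc.1) := by
            rw [hw1'inl, hv2inl, hw1inl _ hnotRa]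
          rw [e1, e2]
          exact hgb' p hp cc hcc
        · rfl
      -- the swapped a-action
      have hacta : N.lact a (q1', w2') (q2, N.lreset Ra w2') := by
        refine ⟨tra, ?_, ?_, ?_, ?_, ?_⟩
        · intro p hp
          refine ⟨htraMem p hp, ?_, ?_⟩
          · show (tra p hp).1 = q1' p
            rw [htraSrc p hp]
            exact (hq1'neg p (hdisj p hp)).symm
          · show (tra p hp).2.2.2 = q2 p
            rw [htraTgt p hp]
            exact (hoffb' p (hdisj p hp)).symm
        · intro p hp
          show q2 p = q1' p
          by_cases hpb : p ∈ N.dom b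
          · rw [hq1'pos p hpb]
            exact (htrbTgt p hpb).symm
          · rw [hq1'neg p hpb, hoffb' p hpb]
            exact hoffa' p hp
        · intro p hp p' hp'
          show w2' (.inr p) = w2' (.inr p')
          rw [hw2'doma p hp, hw2'doma p' hp']
        · intro p hp
          show N.lgsat w2' (tra p hp).2.1
          intro cc hcc
          have hox : N.owner cc.1 = p := (N.trans_wf a p _ (htraMem p hp)).1 cc hcc
          have hnotRb : cc.1 ∉ Rb := fun hin => hdisj _ (hox ▸ hp) (hownRb _ hin)
          have e1 : w2' (.inr (N.owner cc.1)) = v1 (.inr (N.owner cc.1)) := by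
            rw [hox, hw2'doma p hp, hthA p hp]
          have e2 : w2' (.inl cc.1) = v1 (.inl cc.1) := by
            rw [hw2'inl _ hnotRb, hv1inl]
          rw [e1, e2]
          exact hga' p hp cc hcc
        · rfl
      -- the final catch-up delay
      have hcatch : N.ldelayed (N.lreset Ra w2') u2 := by
        refine ⟨fun p => if p ∈ N.dom a then d2 p else if p ∈ N.dom b then 0
          else d1 p + d2 p, ?_, ?_⟩
        · intro p
          by_cases h1 : p ∈ N.dom a
          · simpa [h1] using hd2n p
          · by_cases h2 : p ∈ N.dom b
            · simp [h1, h2]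
            · simp only [if_neg h1, if_neg h2]
              exact add_nonneg (hd1n p) (hd2n p)
        · funext y
          cases y with
          | inr p =>
            show u2 (.inr p) = N.lreset Ra w2' (.inr p)
              + (if p ∈ N.dom a then d2 p else if p ∈ N.dom b then 0 else d1 p + d2 p)
            have e : N.lreset Ra w2' (.inr p) = v (.inr p)
                + (if p ∈ N.dom b then d1 p + d2 p else 0)
                + (if p ∈ N.dom a then d1 p else 0) := rfl
            rw [hresb, lreset_inr, hv2inr, e]
            by_cases h1 : p ∈ N.dom a
            · simp only [if_pos h1, if_neg (hdisj p h1)]; ring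
            · by_cases h2 : p ∈ N.dom b
              · simp only [if_neg h1, if_pos h2]; ring
              · simp only [if_neg h1, if_neg h2]; ring
          | inl x =>
            show u2 (.inl x) = N.lreset Ra w2' (.inl x)
            rw [hresb, lreset_inl, lreset_inl]
            by_cases hxb : x ∈ Rb
            · rw [if_pos hxb, if_neg (fun hxa => hdisjRab x hxa hxb)]
              have hob := hownRb x hxb
              have e : w2' (.inl x) = N.lreset Rb w1' (.inl x) := rfl
              rw [hthB _ hob, e, lreset_inl, if_pos hxb, hw1'domb _ hob]
            · rw [if_neg hxb]
              by_cases hxa : x ∈ Ra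
              · rw [if_pos hxa]
                have hoa := hownRa x hxa
                have e2 : w1 (.inl x) = v1 (.inr (N.owner x)) := by
                  rw [hresa, lreset_inl, if_pos hxa]
                have e3 : w2' (.inr (N.owner x)) = v1 (.inr (N.owner x)) := by
                  rw [hw2'doma _ hoa, ← hthA _ hoa]
                rw [hv2inl, e2, e3]
              · rw [if_neg hxa, hv2inl, hw1inl x hxa, hw2'inl x hxb]
      refine LRunT.cons ⟨d1', ?_, rfl⟩ hactb hw1'domb
        (LRunT.cons ⟨d2', ?_, rfl⟩ hacta hw2'doma (LRunT_absorb hcatch h2))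
      · intro p
        by_cases hp : p ∈ N.dom b
        · simp only [hd1', if_pos hp]; exact add_nonneg (hd1n p) (hd2n p)
        · simp [hd1', hp]
      · intro p
        by_cases hp : p ∈ N.dom a
        · simp only [hd2', if_pos hp]; exact hd1n p
        · simp [hd2', hp]

lemma ins_run {a : N.Act} {tha : ℝ} :
    ∀ (l : List (N.Act × ℝ)) {c c2 : N.State × N.LVal},
    N.LRunT ((a, tha) :: l) c c2 →
    N.LRunT (insT (a, tha) l) c c2 := by
  intro l
  induction l with
  | nil => intro c c2 h; simpa [insT] using h
  | cons f l ih =>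
    intro c c2 h
    rw [insT]
    split
    · exact h
    · rename_i hgt
      have hsw : N.LRunT ((f.1, f.2) :: (a, tha) :: l) c c2 := by
        apply swap_head
        · simpa using h
        · simpa using lt_of_not_ge hgt
      cases hsw with
      | cons hd hb hth h' =>
        exact LRunT.cons hd hb hth (ih h')

lemma sort_run : ∀ (l : List (N.Act × ℝ)) {c c2 : N.State × N.LVal},
    N.LRunT l c c2 →
    ∃ l', l'.Pairwise (fun e f => e.2 ≤ f.2) ∧ (∀ x ∈ l', x ∈ l) ∧ N.LRunT l' c c2 := by
  intro l
  induction l with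
  | nil => intro c c2 h; exact ⟨[], by simp, by simp, h⟩
  | cons e l ih =>
    intro c c2 h
    obtain ⟨q, v⟩ := c
    obtain ⟨ea, eth⟩ := e
    cases h with
    | cons hd hb hth h' =>
      obtain ⟨l', hp', hmem', hrun'⟩ := ih h'
      refine ⟨insT (ea, eth) l', ?_, ?_, ?_⟩
      · exact pairwise_insT hp'
      · intro x hx
        rcases mem_insT hx with rfl | hx
        · exact List.mem_cons_self
        · exact List.mem_cons_of_mem _ (hmem' x hx)
      · exact ins_run l' (LRunT.cons hd hb hth hrun')

lemma toGRun : ∀ (l : List (N.Act × ℝ)) {q : N.State} {v : N.LVal}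
    {c2 : N.State × N.LVal} (w : N.GVal),
    l.Pairwise (fun e f => e.2 ≤ f.2) →
    (∀ x, v (.inl x) = w (.inl x)) →
    (∀ e ∈ l, w (.inr ()) ≤ e.2) →
    N.LRunT l (q, v) c2 →
    ∃ w2, N.GRun (l.map Prod.fst) (q, w) (c2.1, w2) := by
  intro l
  induction l with
  | nil =>
    intro q v c2 w _ _ _ h
    cases h with
    | nil hd => exact ⟨N.gdelay w 0, GRun.nil 0 le_rfl⟩
  | cons e l ih =>
    intro q v c2 w hp hoff hlb h
    obtain ⟨b, th⟩ := e
    cases h with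
    | cons hd hb hth h' =>
      rename_i v1 c1
      obtain ⟨q1, u1⟩ := c1
      obtain ⟨tr, htr, hoffd, hsync, hg, hres⟩ := hb
      simp only at hres
      set R : Set N.Clock := {x | ∃ p hp, x ∈ (tr p hp).2.2.1} with hR
      have hownR : ∀ x ∈ R, N.owner x ∈ N.dom b := by
        rintro x ⟨p, hp, hx⟩
        have := (N.trans_wf b p _ (htr p hp).1).2 x hx
        rw [this]; exact hp
      set dd : ℝ := th - w (.inr ()) with hdd
      have hddn : 0 ≤ dd := by
        have := hlb (b, th) List.mem_cons_self
        simpa [hdd] using this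
      set w1g : N.GVal := N.gdelay w dd with hw1g
      have hw1ginr : w1g (.inr ()) = th := by
        show w (.inr ()) + dd = th
        rw [hdd]; ring
      have hw1ginl : ∀ x, w1g (.inl x) = v1 (.inl x) := by
        intro x
        show w (.inl x) = v1 (.inl x)
        rw [← hoff x]
        exact (ldelayed_inl hd x).symm
      have hgact : N.gact b (q, w1g) (q1, N.greset R w1g) := by
        refine ⟨tr, ?_, ?_, ?_, ?_⟩
        · intro p hp
          exact ⟨(htr p hp).1, (htr p hp).2.1, (htr p hp).2.2⟩
        · intro p hp
          exact hoffd p hp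
        · intro p hp
          intro cc hcc
          have hox : N.owner cc.1 = p := (N.trans_wf b p _ (htr p hp).1).1 cc hcc
          show Cmp.sat cc.2.1 (w1g (.inr ()) - w1g (.inl cc.1)) cc.2.2
          rw [hw1ginr, hw1ginl, ← hth p hp, ← hox]
          exact hg p hp cc hcc
        · rfl
      have hoff1 : ∀ x, u1 (.inl x) = N.greset R w1g (.inl x) := by
        intro x
        rw [hres, lreset_inl, greset_inl]
        by_cases hx : x ∈ R
        · rw [if_pos hx, if_pos hx, hw1ginr, hth _ (hownR x hx)]
        · rw [if_neg hx, if_neg hx, hw1ginl]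
      have hlb1 : ∀ e ∈ l, N.greset R w1g (.inr ()) ≤ e.2 := by
        intro e he
        have : N.greset R w1g (.inr ()) = th := hw1ginr
        rw [this]
        exact (List.pairwise_cons.1 hp).1 e he
      obtain ⟨w2, hg2⟩ := ih (N.greset R w1g) (List.pairwise_cons.1 hp).2
        (fun x => hoff1 x) hlb1 h'
      exact ⟨w2, GRun.cons dd hddn hgact hg2⟩

/-- Soundness of the local zone graph: from a zone path and a valuation in the
final zone, extract a local run (with nonnegative action times). -/
lemma lz_sound : ∀ {u : List N.Act} {c cz : N.State × Set N.LVal},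
    N.LZRun u c cz →
    (∀ w ∈ c.2, ∀ p : Fin N.k, 0 ≤ w (.inr p)) →
    ∀ v ∈ cz.2, ∃ v0 ∈ c.2, ∃ l : List (N.Act × ℝ),
      (∀ e ∈ l, 0 ≤ e.2) ∧ N.LRunT l (c.1, v0) (cz.1, v) := by
  intro u c cz h
  induction h with
  | nil c =>
    intro _ v hv
    exact ⟨v, hv, [], by simp, LRunT.nil (ldelayed_refl v)⟩
  | cons hb h ih =>
    rename_i b u c c1 c2
    intro hnn v hv
    obtain ⟨tr, htr, hoffd, hzeq, hne⟩ := hb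
    set R : Set N.Clock := {x | ∃ p hp, x ∈ (tr p hp).2.2.1} with hR
    have hnn1 : ∀ w ∈ c1.2, ∀ p : Fin N.k, 0 ≤ w (.inr p) := by
      intro w hw p
      rw [hzeq] at hw
      obtain ⟨u0, ⟨v1, hm, rfl⟩, dd, hddn, rfl⟩ := hw
      have : (0:ℝ) ≤ v1 (.inr p) + dd p :=
        add_nonneg (hnn v1 hm.1.1 p) (hddn p)
      simpa [lreset_inr] using this
    obtain ⟨v1', hv1', l, hlnn, hrun⟩ := ih hnn1 v hv
    rw [hzeq] at hv1'
    obtain ⟨u0, ⟨v1, hm, rfl⟩, hdel⟩ := hv1'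
    have hv1Z : v1 ∈ c.2 := hm.1.1
    have hv1g : ∀ p (hp : p ∈ N.dom b), N.lgsat v1 (tr p hp).2.1 := hm.1.2
    have hv1s : ∀ p ∈ N.dom b, ∀ p' ∈ N.dom b, v1 (.inr p) = v1 (.inr p') := hm.2
    set th : ℝ := if hd : (N.dom b).Nonempty then v1 (.inr hd.choose) else 0 with hth
    have hthspec : ∀ p ∈ N.dom b, v1 (.inr p) = th := by
      intro p hp
      have hd : (N.dom b).Nonempty := ⟨p, hp⟩
      rw [hth, dif_pos hd]
      exact hv1s p hp hd.choose hd.choose_spec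
    have hthnn : 0 ≤ th := by
      rw [hth]
      split
      · rename_i hd
        exact hnn v1 hv1Z hd.choose
      · exact le_rfl
    have hlact : N.lact b (c.1, v1) (c1.1, N.lreset R v1) := by
      refine ⟨tr, ?_, ?_, ?_, ?_, ?_⟩
      · exact fun p hp => ⟨(htr p hp).1, (htr p hp).2.1, (htr p hp).2.2⟩
      · exact hoffd
      · exact hv1s
      · exact hv1g
      · rfl
    refine ⟨v1, hv1Z, (b, th) :: l, ?_, ?_⟩
    · intro e he
      rcases List.mem_cons.1 he with rfl | he
      · exact hthnn
      · exact hlnn e he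
    · exact LRunT.cons (ldelayed_refl v1) hlact hthspec (LRunT_absorb hdel hrun)

end Network
end Aux

theorem stmt17 (N : Network) (abs : Set N.GVal → Set N.GVal) (G : SyncGraph N abs)
    (q : N.State) (Z : Set N.LVal) (hmem : (q, Z) ∈ G.nodes)
    (hreach : Relation.ReflTransGen G.edges (N.initState, N.lzoneInit) (q, Z))
    (hne : Z.Nonempty) : N.GReach q := by
  have hpath : ∃ u, N.LZRun u (N.initState, N.lzoneInit) (q, Z) := by
    refine Relation.ReflTransGen.head_induction_on hreach ?_ ?_
    · exact ⟨[], Network.LZRun.nil _⟩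
    · intro s t hst _ ih
      obtain ⟨u, hu⟩ := ih
      obtain ⟨b, hb⟩ := G.edges_lzg s t hst
      exact ⟨b :: u, Network.LZRun.cons hb hu⟩
  obtain ⟨u, hlz⟩ := hpath
  obtain ⟨v, hv⟩ := hne
  have hnn0 : ∀ w ∈ N.lzoneInit, ∀ p : Fin N.k, 0 ≤ w (Sum.inr p) := by
    intro w hw p
    obtain ⟨w0, hw0, dd, hddn, rfl⟩ := hw
    rw [Set.mem_singleton_iff] at hw0
    subst hw0
    have h1 : (0:ℝ) ≤ N.lvalInit (Sum.inr p) + dd p := by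
      simpa [Network.lvalInit] using hddn p
    exact h1
  obtain ⟨v0, hv0, l, hlnn, hrun⟩ := Network.lz_sound hlz hnn0 v hv
  obtain ⟨w0, hw0, hdel⟩ := hv0
  rw [Set.mem_singleton_iff] at hw0
  subst hw0
  have hrun0 : N.LRunT l (N.initState, N.lvalInit) (q, v) := Network.LRunT_absorb hdel hrun
  obtain ⟨l', hp', hmem', hrun'⟩ := Network.sort_run l hrun0
  have hoff0 : ∀ x, N.lvalInit (Sum.inl x) = N.gvalInit (Sum.inl x) := fun x => rfl
  have hlb : ∀ e ∈ l', N.gvalInit (Sum.inr ()) ≤ e.2 := fun e he => hlnn e (hmem' e he)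
  obtain ⟨w2, hg⟩ := Network.toGRun l' N.gvalInit hp' hoff0 hlb hrun'
  exact ⟨l'.map Prod.fst, w2, hg⟩
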